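/- Let G = (G, ·) be a group and λ : G → Aut(G) an anti-homomorphism of groups such that a · λ_a(b) · a⁻¹ · b⁻¹ ∈ Ker λ for all a, b ∈ G. Define a ∘ b = a · λ_a(b). Then (G, ∘) is a group and (G, ·, ∘) is a λ-anti-homomorphic skew left brace (hence symmetric). -/

import Mathlib

variable {G : Type*} [Group G]

/-- The λ-map of a pair of operations: λ_a(b) = a⁻¹ · (a ∘ b). -/
def brLam (circ : G → G → G) (a : G) : G → G := fun b => a⁻¹ * circ a b

/-- `circ` together with identity `e` and inverse `inv` is a group operation on `G`. -/
def IsGroupOp (circ : G → G → G) (e : G) (inv : G → G) : Prop :=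
  (∀ a b c : G, circ (circ a b) c = circ a (circ b c)) ∧
  (∀ a : G, circ e a = a) ∧ (∀ a : G, circ a e = a) ∧
  (∀ a : G, circ (inv a) a = e) ∧ (∀ a : G, circ a (inv a) = e)

/-- The skew left brace compatibility: a ∘ (b·c) = (a∘b) · a⁻¹ · (a∘c). -/
def BraceCompat (circ : G → G → G) : Prop :=
  ∀ a b c : G, circ a (b * c) = circ a b * a⁻¹ * circ a c

/-- λ : (G,·) → Aut(G,·) is an anti-homomorphism. -/
def LamAntiHom (circ : G → G → G) : Prop :=
  ∀ a b : G, brLam circ (a * b) = brLam circ b ∘ brLam circ a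

/-- λ : (G,·) → Aut(G,·) is a homomorphism. -/
def LamHom (circ : G → G → G) : Prop :=
  ∀ a b : G, brLam circ (a * b) = brLam circ a ∘ brLam circ b

/-- (G, ∘, ·) is a skew left brace, i.e. (G, ·, ∘) is symmetric:
a · (b ∘ c) = ((a·b) ∘ ā) ∘ (a·c) with ā the ∘-inverse of a. -/
def SymBrace (circ : G → G → G) (cinv : G → G) : Prop :=
  ∀ a b c : G, a * circ b c = circ (circ (a * b) (cinv a)) (a * c)

theorem stmt7 {G : Type*} [Group G] (lamb : G → MulAut G)
    (hanti : ∀ a b : G, lamb (a * b) = lamb b * lamb a)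
    (hker : ∀ a b : G, lamb (a * lamb a b * a⁻¹ * b⁻¹) = 1) :
    IsGroupOp (fun a b : G => a * lamb a b) 1 (fun a : G => (lamb a)⁻¹ a⁻¹) ∧
    BraceCompat (fun a b : G => a * lamb a b) ∧
    LamAntiHom (fun a b : G => a * lamb a b) ∧
    SymBrace (fun a b : G => a * lamb a b) (fun a : G => (lamb a)⁻¹ a⁻¹) := by
  have h1 : lamb 1 = 1 := by
    have h := hanti 1 1
    rw [one_mul] at h
    exact right_eq_mul.mp h
  have hinv : ∀ a : G, lamb a⁻¹ = (lamb a)⁻¹ := by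
    intro a
    have h := hanti a a⁻¹
    rw [mul_inv_cancel, h1] at h
    exact (eq_inv_of_mul_eq_one_left h.symm)
  have hcirc : ∀ a b : G, lamb (a * lamb a b) = lamb a * lamb b := by
    intro a b
    have key : a * lamb a b = (a * lamb a b * a⁻¹ * b⁻¹) * (b * a) := by group
    rw [key, hanti, hker, mul_one, hanti]
  have hinvc : ∀ a : G, a * lamb a ((lamb a)⁻¹ a⁻¹) = 1 := by
    intro a
    simp
  have hlinv2 : ∀ a : G, lamb ((lamb a)⁻¹ a⁻¹) = (lamb a)⁻¹ := by
    intro a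
    have h := hcirc a ((lamb a)⁻¹ a⁻¹)
    rw [hinvc a, h1] at h
    exact eq_inv_of_mul_eq_one_right h.symm
  refine ⟨⟨?_, ?_, ?_, ?_, ?_⟩, ?_, ?_, ?_⟩
  · intro a b c
    simp only [hcirc, MulAut.mul_apply, map_mul, mul_assoc]
  · intro a; simp [h1]
  · intro a; simp
  · intro a
    simp only [hlinv2]
    rw [← map_mul]
    simp
  · exact hinvc
  · intro a b c
    simp [map_mul, mul_assoc]
  · intro a b
    funext x
    simp [brLam, hanti a b, MulAut.mul_apply, mul_assoc]
  · intro a b c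
    simp only
    have hd : (a * b) * lamb (a * b) ((lamb a)⁻¹ a⁻¹) = a * (b * lamb b a⁻¹) := by
      rw [hanti]
      simp [MulAut.mul_apply, mul_assoc]
    have hld : lamb (a * (b * lamb b a⁻¹)) = lamb b := by
      rw [hanti, hcirc, hinv, mul_assoc, inv_mul_cancel, mul_one]
    rw [hd, hld]
    simp [map_mul, map_inv, mul_assoc]
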